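/- Let H = conv{(cos(kπ/3), sin(kπ/3)) : k = 0,…,5} and H' = H + (0,√3) be two adjacent unit hexagons, decomposed into unit rhombuses as H = P₁ ∪ P₂ ∪ P₃ with P₁ = conv{(0,0), (1,0), (1/2,√3/2), (−1/2,√3/2)}, P₂ = conv{(0,0), (−1/2,√3/2), (−1,0), (−1/2,−√3/2)}, P₃ = conv{(0,0), (−1/2,−√3/2), (1/2,−√3/2), (1,0)}, and H' = Q_a ∪ Q_b ∪ Q_c with Q_a = conv{(0,√3), (1,√3), (1/2,3√3/2), (−1/2,3√3/2)}, Q_b = conv{(0,√3), (−1/2,3√3/2), (−1,√3), (−1/2,√3/2)}, Q_c = conv{(0,√3), (−1/2,√3/2), (1/2,√3/2), (1,√3)}. For compact sets K, K' let G_{K,K'}(d) denote the probability that ‖X − Y‖ ≤ d when X is uniform in K, Y is uniform in K', and X, Y are independent. Then for every d ∈ ℝ: G_{H,H'}(d) = (1/9)·[G_{P₁,Q_c}(d) + G_{P₂,Q_b}(d) + G_{P₃,Q_a}(d)] + (2/9)·[G_{P₁,Q_a}(d) + G_{P₁,Q_b}(d) + G_{P₂,Q_a}(d)]. -/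

import Mathlib

open MeasureTheory Real Set

noncomputable section

abbrev E2 := EuclideanSpace ℝ (Fin 2)

def pt (a b : ℝ) : E2 := WithLp.toLp 2 ![a, b]

/-- The uniform probability measure on a set `K ⊆ ℝ²`: normalized restricted Lebesgue measure. -/
def unif (K : Set E2) : Measure E2 := (volume K)⁻¹ • volume.restrict K

/-- The unit hexagon: convex hull of the six points (cos(kπ/3), sin(kπ/3)). -/
def hexa : Set E2 :=
  convexHull ℝ (Set.range fun k : Fin 6 => pt (Real.cos (k * π / 3)) (Real.sin (k * π / 3)))

/-- The adjacent unit hexagon H' = H + (0,√3). -/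
def hexa' : Set E2 := (fun p => p + pt 0 (Real.sqrt 3)) '' hexa

/-- P₁ = conv{(0,0), (1,0), (1/2,√3/2), (−1/2,√3/2)}. -/
def P1 : Set E2 :=
  convexHull ℝ {pt 0 0, pt 1 0, pt (1/2) (Real.sqrt 3 / 2), pt (-(1/2)) (Real.sqrt 3 / 2)}

/-- P₂ = conv{(0,0), (−1/2,√3/2), (−1,0), (−1/2,−√3/2)}. -/
def P2 : Set E2 :=
  convexHull ℝ {pt 0 0, pt (-(1/2)) (Real.sqrt 3 / 2), pt (-1) 0,
    pt (-(1/2)) (-(Real.sqrt 3 / 2))}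

/-- P₃ = conv{(0,0), (−1/2,−√3/2), (1/2,−√3/2), (1,0)}. -/
def P3 : Set E2 :=
  convexHull ℝ {pt 0 0, pt (-(1/2)) (-(Real.sqrt 3 / 2)), pt (1/2) (-(Real.sqrt 3 / 2)),
    pt 1 0}

/-- Q_a = conv{(0,√3), (1,√3), (1/2,3√3/2), (−1/2,3√3/2)}. -/
def Qa : Set E2 :=
  convexHull ℝ {pt 0 (Real.sqrt 3), pt 1 (Real.sqrt 3), pt (1/2) (3*Real.sqrt 3/2),
    pt (-(1/2)) (3*Real.sqrt 3/2)}

/-- Q_b = conv{(0,√3), (−1/2,3√3/2), (−1,√3), (−1/2,√3/2)}. -/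
def Qb : Set E2 :=
  convexHull ℝ {pt 0 (Real.sqrt 3), pt (-(1/2)) (3*Real.sqrt 3/2), pt (-1) (Real.sqrt 3),
    pt (-(1/2)) (Real.sqrt 3/2)}

/-- Q_c = conv{(0,√3), (−1/2,√3/2), (1/2,√3/2), (1,√3)}. -/
def Qc : Set E2 :=
  convexHull ℝ {pt 0 (Real.sqrt 3), pt (-(1/2)) (Real.sqrt 3/2), pt (1/2) (Real.sqrt 3/2),
    pt 1 (Real.sqrt 3)}

open scoped ENNReal

/-- G K K' d : the probability that ‖X − Y‖ ≤ d for independent X uniform in K and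
Y uniform in K'. -/
def G (K K' : Set E2) (d : ℝ) : ℝ≥0∞ :=
  ((unif K).prod (unif K')) {p : E2 × E2 | dist p.1 p.2 ≤ d}


/-! ### Auxiliary development -/

@[simp] lemma pt_app0 {a b : ℝ} : pt a b 0 = a := rfl
@[simp] lemma pt_app1 {a b : ℝ} : pt a b 1 = b := rfl
@[simp] lemma comb_app {a b : ℝ} {u w : E2} {i : Fin 2} :
    (a • u + b • w) i = a * u i + b * w i := rfl
@[simp] lemma add_app {p q : E2} {i : Fin 2} : (p + q) i = p i + q i := rfl

lemma E2_ext {p q : E2} (h0 : p 0 = q 0) (h1 : p 1 = q 1) : p = q := by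
  apply PiLp.ext; intro i; fin_cases i <;> assumption

lemma pt_zero_eq : pt 0 0 = 0 := by apply E2_ext <;> rfl

/-! ### Parallelograms -/

def lin (u w : E2) : E2 →ₗ[ℝ] E2 where
  toFun p := p 0 • u + p 1 • w
  map_add' p q := by
    show ((p 0 + q 0) • u + (p 1 + q 1) • w) = _
    module
  map_smul' r p := by
    show ((r * p 0) • u + (r * p 1) • w) = r • _
    module

def usq : Set E2 := {p | p 0 ∈ Icc (0:ℝ) 1 ∧ p 1 ∈ Icc (0:ℝ) 1}

def par (u w : E2) : Set E2 := (lin u w) '' usq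

lemma mem_par {u w p : E2} :
    p ∈ par u w ↔ ∃ a b : ℝ, a ∈ Icc (0:ℝ) 1 ∧ b ∈ Icc (0:ℝ) 1 ∧ p = a • u + b • w := by
  constructor
  · rintro ⟨q, ⟨h0, h1⟩, rfl⟩; exact ⟨q 0, q 1, h0, h1, rfl⟩
  · rintro ⟨a, b, ha, hb, rfl⟩
    exact ⟨pt a b, ⟨by simpa using ha, by simpa using hb⟩, by simp [lin]⟩

lemma convex_usq : Convex ℝ usq := by
  intro x hx y hy a b ha hb hab
  refine ⟨⟨?_, ?_⟩, ?_, ?_⟩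
  · have := hx.1.1; have := hy.1.1
    show 0 ≤ a * x 0 + b * y 0
    positivity
  · have := hx.1.2; have := hy.1.2
    show a * x 0 + b * y 0 ≤ 1
    nlinarith
  · have := hx.2.1; have := hy.2.1
    show 0 ≤ a * x 1 + b * y 1
    positivity
  · have := hx.2.2; have := hy.2.2
    show a * x 1 + b * y 1 ≤ 1
    nlinarith

lemma hull_par (u w : E2) : convexHull ℝ {0, u, w, u + w} = par u w := by
  apply Subset.antisymm
  · apply convexHull_min _ (convex_usq.linear_image (lin u w))
    rintro x (rfl | rfl | rfl | rfl)
    · exact mem_par.2 ⟨0, 0, by norm_num, by norm_num, by module⟩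
    · exact mem_par.2 ⟨1, 0, by norm_num, by norm_num, by module⟩
    · exact mem_par.2 ⟨0, 1, by norm_num, by norm_num, by module⟩
    · exact mem_par.2 ⟨1, 1, by norm_num, by norm_num, by module⟩
  · rintro p hp
    obtain ⟨a, b, ⟨ha0, ha1⟩, ⟨hb0, hb1⟩, rfl⟩ := mem_par.1 hp
    have h0 : (0:E2) ∈ convexHull ℝ ({0, u, w, u + w} : Set E2) := subset_convexHull _ _ (by simp)
    have hu : u ∈ convexHull ℝ ({0, u, w, u + w} : Set E2) := subset_convexHull _ _ (by simp)
    have hw : w ∈ convexHull ℝ ({0, u, w, u + w} : Set E2) := subset_convexHull _ _ (by simp)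
    have huw : u + w ∈ convexHull ℝ ({0, u, w, u + w} : Set E2) := subset_convexHull _ _ (by simp)
    have hc := convex_convexHull ℝ ({0, u, w, u + w} : Set E2)
    have h1 : a • u ∈ convexHull ℝ ({0, u, w, u + w} : Set E2) := by
      have := hc h0 hu (by linarith : (0:ℝ) ≤ 1 - a) ha0 (by ring)
      simpa using this
    have h2 : a • u + w ∈ convexHull ℝ ({0, u, w, u + w} : Set E2) := by
      have := hc hw huw (by linarith : (0:ℝ) ≤ 1 - a) ha0 (by ring)
      have e : (1 - a) • w + a • (u + w) = a • u + w := by module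
      rwa [e] at this
    have := hc h1 h2 (by linarith : (0:ℝ) ≤ 1 - b) hb0 (by ring)
    have e : (1 - b) • (a • u) + b • (a • u + w) = a • u + b • w := by module
    rwa [e] at this

lemma det_lin (u w : E2) : LinearMap.det (lin u w) = u 0 * w 1 - u 1 * w 0 := by
  rw [← LinearMap.det_toMatrix (PiLp.basisFun 2 ℝ (Fin 2)) (lin u w), Matrix.det_fin_two]
  simp [LinearMap.toMatrix_apply, lin, PiLp.basisFun_apply, PiLp.basisFun_repr]
  ring

lemma vol_usq : volume usq = 1 := by
  have h := (EuclideanSpace.volume_preserving_symm_measurableEquiv_toLp (ι := Fin 2)).measure_preimage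
    (s := Set.pi Set.univ (fun _ : Fin 2 => Icc (0:ℝ) 1)) (by
      exact (MeasurableSet.univ_pi (fun _ => measurableSet_Icc)).nullMeasurableSet)
  have heq : (MeasurableEquiv.toLp 2 (Fin 2 → ℝ)).symm ⁻¹'
      (Set.pi Set.univ (fun _ : Fin 2 => Icc (0:ℝ) 1)) = usq := by
    ext p
    simp only [Set.mem_preimage, Set.mem_pi, Set.mem_univ, forall_true_left, Fin.forall_fin_two]
    rfl
  rw [heq] at h
  rw [h, volume_pi_pi]
  simp [Real.volume_Icc]

lemma vol_par (u w : E2) :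
    volume (par u w) = ENNReal.ofReal |u 0 * w 1 - u 1 * w 0| := by
  rw [par, Measure.addHaar_image_linearMap, det_lin, vol_usq, mul_one]

/-! ### Identification of the rhombi -/

lemma P1_eq : P1 = par (pt 1 0) (pt (-(1/2)) (Real.sqrt 3 / 2)) := by
  rw [P1, pt_zero_eq,
    show pt (1/2) (Real.sqrt 3 / 2) = pt 1 0 + pt (-(1/2)) (Real.sqrt 3 / 2) by
      apply E2_ext <;> simp <;> norm_num,
    show ({0, pt 1 0, pt 1 0 + pt (-(1/2)) (Real.sqrt 3 / 2), pt (-(1/2)) (Real.sqrt 3 / 2)} :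
        Set E2)
      = {0, pt 1 0, pt (-(1/2)) (Real.sqrt 3 / 2), pt 1 0 + pt (-(1/2)) (Real.sqrt 3 / 2)} by
      ext x; simp only [Set.mem_insert_iff, Set.mem_singleton_iff]; tauto]
  exact hull_par _ _

lemma P2_eq : P2 = par (pt (-(1/2)) (Real.sqrt 3 / 2)) (pt (-(1/2)) (-(Real.sqrt 3 / 2))) := by
  rw [P2, pt_zero_eq,
    show pt (-1) 0 = pt (-(1/2)) (Real.sqrt 3 / 2) + pt (-(1/2)) (-(Real.sqrt 3 / 2)) by
      apply E2_ext <;> simp <;> norm_num,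
    show ({0, pt (-(1/2)) (Real.sqrt 3 / 2),
        pt (-(1/2)) (Real.sqrt 3 / 2) + pt (-(1/2)) (-(Real.sqrt 3 / 2)),
        pt (-(1/2)) (-(Real.sqrt 3 / 2))} : Set E2)
      = {0, pt (-(1/2)) (Real.sqrt 3 / 2), pt (-(1/2)) (-(Real.sqrt 3 / 2)),
        pt (-(1/2)) (Real.sqrt 3 / 2) + pt (-(1/2)) (-(Real.sqrt 3 / 2))} by
      ext x; simp only [Set.mem_insert_iff, Set.mem_singleton_iff]; tauto]
  exact hull_par _ _

lemma P3_eq : P3 = par (pt 1 0) (pt (-(1/2)) (-(Real.sqrt 3 / 2))) := by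
  rw [P3, pt_zero_eq,
    show pt (1/2) (-(Real.sqrt 3 / 2)) = pt 1 0 + pt (-(1/2)) (-(Real.sqrt 3 / 2)) by
      apply E2_ext <;> simp <;> norm_num,
    show ({0, pt (-(1/2)) (-(Real.sqrt 3 / 2)), pt 1 0 + pt (-(1/2)) (-(Real.sqrt 3 / 2)),
        pt 1 0} : Set E2)
      = {0, pt 1 0, pt (-(1/2)) (-(Real.sqrt 3 / 2)),
        pt 1 0 + pt (-(1/2)) (-(Real.sqrt 3 / 2))} by
      ext x; simp only [Set.mem_insert_iff, Set.mem_singleton_iff]; tauto]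
  exact hull_par _ _

lemma vol_P1 : volume P1 = ENNReal.ofReal (Real.sqrt 3 / 2) := by
  rw [P1_eq, vol_par]; norm_num; rw [abs_of_nonneg (by positivity)]

lemma vol_P2 : volume P2 = ENNReal.ofReal (Real.sqrt 3 / 2) := by
  rw [P2_eq, vol_par]
  have : (pt (-(1/2)) (Real.sqrt 3 / 2)) 0 * (pt (-(1/2)) (-(Real.sqrt 3 / 2))) 1
      - (pt (-(1/2)) (Real.sqrt 3 / 2)) 1 * (pt (-(1/2)) (-(Real.sqrt 3 / 2))) 0
      = Real.sqrt 3 / 2 := by simp; ring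
  rw [this, abs_of_nonneg (by positivity)]

lemma vol_P3 : volume P3 = ENNReal.ofReal (Real.sqrt 3 / 2) := by
  rw [P3_eq, vol_par]
  have : (pt 1 0) 0 * (pt (-(1/2)) (-(Real.sqrt 3 / 2))) 1
      - (pt 1 0) 1 * (pt (-(1/2)) (-(Real.sqrt 3 / 2))) 0 = -(Real.sqrt 3 / 2) := by simp
  rw [this, abs_neg, abs_of_nonneg (by positivity)]

/-! ### Trigonometric values -/

lemma cos1 : Real.cos (π / 3) = 1/2 := Real.cos_pi_div_three
lemma sin1 : Real.sin (π / 3) = Real.sqrt 3 / 2 := Real.sin_pi_div_three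
lemma cos2 : Real.cos (2 * π / 3) = -(1/2) := by
  rw [show (2:ℝ) * π / 3 = π - π/3 by ring, Real.cos_pi_sub, cos1]
lemma sin2 : Real.sin (2 * π / 3) = Real.sqrt 3 / 2 := by
  rw [show (2:ℝ) * π / 3 = π - π/3 by ring, Real.sin_pi_sub, sin1]
lemma cos3 : Real.cos (3 * π / 3) = -1 := by
  rw [show (3:ℝ) * π / 3 = π by ring, Real.cos_pi]
lemma sin3 : Real.sin (3 * π / 3) = 0 := by
  rw [show (3:ℝ) * π / 3 = π by ring, Real.sin_pi]
lemma cos4 : Real.cos (4 * π / 3) = -(1/2) := by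
  rw [show (4:ℝ) * π / 3 = π + π/3 by ring, Real.cos_add, Real.cos_pi, Real.sin_pi, cos1]
  ring
lemma sin4 : Real.sin (4 * π / 3) = -(Real.sqrt 3 / 2) := by
  rw [show (4:ℝ) * π / 3 = π + π/3 by ring, Real.sin_add, Real.cos_pi, Real.sin_pi, sin1]
  ring
lemma cos5 : Real.cos (5 * π / 3) = 1/2 := by
  rw [show (5:ℝ) * π / 3 = 2*π - π/3 by ring, Real.cos_sub, Real.cos_two_pi, Real.sin_two_pi,
    cos1]
  ring
lemma sin5 : Real.sin (5 * π / 3) = -(Real.sqrt 3 / 2) := by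
  rw [show (5:ℝ) * π / 3 = 2*π - π/3 by ring, Real.sin_sub, Real.cos_two_pi, Real.sin_two_pi,
    sin1]
  ring

lemma hexa_vertices :
    (Set.range fun k : Fin 6 => pt (Real.cos (k * π / 3)) (Real.sin (k * π / 3)))
      = {pt 1 0, pt (1/2) (Real.sqrt 3/2), pt (-(1/2)) (Real.sqrt 3/2), pt (-1) 0,
          pt (-(1/2)) (-(Real.sqrt 3/2)), pt (1/2) (-(Real.sqrt 3/2))} := by
  apply Subset.antisymm
  · rintro x ⟨k, rfl⟩
    fin_cases k
    · norm_num
    · norm_num [cos1, sin1]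
    · norm_num [cos2, sin2]
    · norm_num [cos3, sin3]
    · norm_num [cos4, sin4]
    · norm_num [cos5, sin5]
  · rintro x (rfl | rfl | rfl | rfl | rfl | rfl)
    · exact ⟨0, by norm_num⟩
    · exact ⟨1, by norm_num [cos1, sin1]⟩
    · exact ⟨2, by norm_num [cos2, sin2]⟩
    · refine ⟨3, ?_⟩
      show pt (Real.cos (((3:Fin 6):ℝ) * π / 3)) (Real.sin (((3:Fin 6):ℝ) * π / 3)) = _
      rw [show ((3:Fin 6):ℝ) = 3 from rfl, cos3, sin3]
    · refine ⟨4, ?_⟩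
      show pt (Real.cos (((4:Fin 6):ℝ) * π / 3)) (Real.sin (((4:Fin 6):ℝ) * π / 3)) = _
      rw [show ((4:Fin 6):ℝ) = 4 from rfl, cos4, sin4]
    · refine ⟨5, ?_⟩
      show pt (Real.cos (((5:Fin 6):ℝ) * π / 3)) (Real.sin (((5:Fin 6):ℝ) * π / 3)) = _
      rw [show ((5:Fin 6):ℝ) = 5 from rfl, cos5, sin5]

/-! ### Hexagon as union of rhombi -/

def hp : Set E2 := {p | p 1 ≤ Real.sqrt 3/2 ∧ -(Real.sqrt 3/2) ≤ p 1 ∧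
  Real.sqrt 3 * p 0 + p 1 ≤ Real.sqrt 3 ∧ -(Real.sqrt 3) ≤ Real.sqrt 3 * p 0 + p 1 ∧
  Real.sqrt 3 * p 0 - p 1 ≤ Real.sqrt 3 ∧ -(Real.sqrt 3) ≤ Real.sqrt 3 * p 0 - p 1}

lemma convex_hp : Convex ℝ hp := by
  intro x hx y hy a b ha hb hab
  obtain ⟨h1, h2, h3, h4, h5, h6⟩ := hx
  obtain ⟨k1, k2, k3, k4, k5, k6⟩ := hy
  have e0 : (a • x + b • y) 0 = a * x 0 + b * y 0 := rfl
  have e1 : (a • x + b • y) 1 = a * x 1 + b * y 1 := rfl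
  have hs3 : (0:ℝ) ≤ Real.sqrt 3 := Real.sqrt_nonneg 3
  refine ⟨?_, ?_, ?_, ?_, ?_, ?_⟩
  · rw [e1]
    nlinarith [mul_le_mul_of_nonneg_left h1 ha, mul_le_mul_of_nonneg_left k1 hb]
  · rw [e1]
    nlinarith [mul_le_mul_of_nonneg_left h2 ha, mul_le_mul_of_nonneg_left k2 hb]
  · rw [e0, e1]
    nlinarith [mul_le_mul_of_nonneg_left h3 ha, mul_le_mul_of_nonneg_left k3 hb]
  · rw [e0, e1]
    nlinarith [mul_le_mul_of_nonneg_left h4 ha, mul_le_mul_of_nonneg_left k4 hb]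
  · rw [e0, e1]
    nlinarith [mul_le_mul_of_nonneg_left h5 ha, mul_le_mul_of_nonneg_left k5 hb]
  · rw [e0, e1]
    nlinarith [mul_le_mul_of_nonneg_left h6 ha, mul_le_mul_of_nonneg_left k6 hb]

lemma hexa_sub_hp : hexa ⊆ hp := by
  rw [hexa]
  apply convexHull_min _ convex_hp
  rw [hexa_vertices]
  have h3 : (0:ℝ) ≤ Real.sqrt 3 := Real.sqrt_nonneg 3
  rintro x (rfl | rfl | rfl | rfl | rfl | rfl) <;>
    refine ⟨?_, ?_, ?_, ?_, ?_, ?_⟩ <;> simp <;> linarith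

lemma div_mem_Icc {x t : ℝ} (ht : 0 < t) (h0 : 0 ≤ x) (h1 : x ≤ t) : x / t ∈ Icc (0:ℝ) 1 :=
  ⟨div_nonneg h0 ht.le, (div_le_one ht).2 h1⟩

lemma hp_sub_union : hp ⊆ P1 ∪ P2 ∪ P3 := by
  rw [P1_eq, P2_eq, P3_eq]
  rintro p ⟨h1, h2, h3, h4, h5, h6⟩
  have ht : (0:ℝ) < Real.sqrt 3 := Real.sqrt_pos.2 (by norm_num)
  have htne : Real.sqrt 3 ≠ 0 := ne_of_gt ht
  by_cases hy : 0 ≤ p 1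
  · by_cases hx : 0 ≤ Real.sqrt 3 * p 0 + p 1
    · left; left
      refine mem_par.2 ⟨(Real.sqrt 3 * p 0 + p 1) / Real.sqrt 3, 2 * p 1 / Real.sqrt 3,
        div_mem_Icc ht hx h3, div_mem_Icc ht (by linarith) (by linarith), ?_⟩
      apply E2_ext <;> simp <;> field_simp <;> ring
    · left; right
      refine mem_par.2 ⟨(p 1 - Real.sqrt 3 * p 0) / Real.sqrt 3,
        (-(Real.sqrt 3 * p 0) - p 1) / Real.sqrt 3,
        div_mem_Icc ht (by linarith) (by linarith), div_mem_Icc ht (by linarith) (by linarith), ?_⟩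
      apply E2_ext <;> simp <;> field_simp <;> ring
  · by_cases hx : 0 ≤ Real.sqrt 3 * p 0 - p 1
    · right
      refine mem_par.2 ⟨(Real.sqrt 3 * p 0 - p 1) / Real.sqrt 3, -(2 * p 1) / Real.sqrt 3,
        div_mem_Icc ht hx h5, div_mem_Icc ht (by linarith) (by linarith), ?_⟩
      apply E2_ext <;> simp <;> field_simp <;> ring
    · left; right
      refine mem_par.2 ⟨(p 1 - Real.sqrt 3 * p 0) / Real.sqrt 3,
        (-(Real.sqrt 3 * p 0) - p 1) / Real.sqrt 3,
        div_mem_Icc ht (by linarith) (by linarith), div_mem_Icc ht (by linarith) (by linarith), ?_⟩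
      apply E2_ext <;> simp <;> field_simp <;> ring

lemma union_sub_hexa : P1 ∪ P2 ∪ P3 ⊆ hexa := by
  have hv : ∀ x ∈ ({pt 1 0, pt (1/2) (Real.sqrt 3/2), pt (-(1/2)) (Real.sqrt 3/2), pt (-1) 0,
      pt (-(1/2)) (-(Real.sqrt 3/2)), pt (1/2) (-(Real.sqrt 3/2))} : Set E2), x ∈ hexa := by
    intro x hx
    exact subset_convexHull _ _ (by rw [hexa_vertices]; exact hx)
  have hc := convex_convexHull ℝ
    (Set.range fun k : Fin 6 => pt (Real.cos (k * π / 3)) (Real.sin (k * π / 3)))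
  have h0 : pt 0 0 ∈ hexa := by
    have e : pt 0 0 = (1/2 : ℝ) • pt 1 0 + (1/2 : ℝ) • pt (-1) 0 := by
      apply E2_ext <;> simp <;> norm_num
    rw [e]
    exact hc (hv _ (by norm_num)) (hv _ (by norm_num)) (by norm_num) (by norm_num) (by norm_num)
  rintro x ((hx | hx) | hx)
  · rw [P1] at hx
    refine convexHull_min ?_ hc hx
    rintro y (rfl | rfl | rfl | rfl)
    · exact h0
    · exact hv _ (by norm_num)
    · exact hv _ (by norm_num)
    · exact hv _ (by norm_num)
  · rw [P2] at hx
    refine convexHull_min ?_ hc hx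
    rintro y (rfl | rfl | rfl | rfl)
    · exact h0
    · exact hv _ (by norm_num)
    · exact hv _ (by norm_num)
    · exact hv _ (by norm_num)
  · rw [P3] at hx
    refine convexHull_min ?_ hc hx
    rintro y (rfl | rfl | rfl | rfl)
    · exact h0
    · exact hv _ (by norm_num)
    · exact hv _ (by norm_num)
    · exact hv _ (by norm_num)

lemma hexa_eq : hexa = P1 ∪ P2 ∪ P3 :=
  Subset.antisymm (hexa_sub_hp.trans hp_sub_union) union_sub_hexa

/-! ### Null pairwise intersections -/

def lfn (c d : ℝ) : E2 →ₗ[ℝ] ℝ where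
  toFun p := c * p 0 + d * p 1
  map_add' p q := by show c * (p 0 + q 0) + d * (p 1 + q 1) = _; ring
  map_smul' r p := by show c * (r * p 0) + d * (r * p 1) = r * _; ring

lemma vol_line (c d : ℝ) (h : c ≠ 0 ∨ d ≠ 0) :
    volume {p : E2 | c * p 0 + d * p 1 = 0} = 0 := by
  have hset : {p : E2 | c * p 0 + d * p 1 = 0} = (LinearMap.ker (lfn c d) : Set E2) := by
    ext p; simp [LinearMap.mem_ker, lfn]
  rw [hset]
  apply Measure.addHaar_submodule
  intro hT
  have h1 : ∀ p : E2, lfn c d p = 0 := fun p => LinearMap.mem_ker.1 (hT ▸ Submodule.mem_top)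
  have hc : c = 0 := by have := h1 (pt 1 0); simpa [lfn] using this
  have hd : d = 0 := by have := h1 (pt 0 1); simpa [lfn] using this
  rcases h with h | h <;> exact h (by assumption)

lemma null_P12 : volume (P1 ∩ P2) = 0 := by
  refine measure_mono_null (?_ : _ ⊆ {p : E2 | Real.sqrt 3 * p 0 + 1 * p 1 = 0}) ?_
  · rintro p ⟨hp1, hp2⟩
    rw [P1_eq] at hp1; rw [P2_eq] at hp2
    obtain ⟨a, b, ⟨ha0, ha1⟩, ⟨hb0, hb1⟩, rfl⟩ := mem_par.1 hp1
    obtain ⟨a', b', ⟨ha0', ha1'⟩, ⟨hb0', hb1'⟩, he⟩ := mem_par.1 hp2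
    have ht : (0:ℝ) ≤ Real.sqrt 3 := Real.sqrt_nonneg 3
    have e1 : Real.sqrt 3 * ((a • pt 1 0 + b • pt (-(1/2)) (Real.sqrt 3 / 2)) 0)
        + 1 * ((a • pt 1 0 + b • pt (-(1/2)) (Real.sqrt 3 / 2)) 1) = Real.sqrt 3 * a := by
      simp; ring
    have e2 : Real.sqrt 3 * ((a' • pt (-(1/2)) (Real.sqrt 3 / 2)
        + b' • pt (-(1/2)) (-(Real.sqrt 3 / 2))) 0)
        + 1 * ((a' • pt (-(1/2)) (Real.sqrt 3 / 2)
        + b' • pt (-(1/2)) (-(Real.sqrt 3 / 2))) 1) = -(Real.sqrt 3 * b') := by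
      simp; ring
    show Real.sqrt 3 * _ + 1 * _ = 0
    rw [he] at e1 ⊢
    rw [e1] at e2 ⊢
    have hge : 0 ≤ Real.sqrt 3 * a := mul_nonneg ht ha0
    have hle : Real.sqrt 3 * a ≤ 0 := by
      rw [e2]; exact neg_nonpos.2 (mul_nonneg ht hb0')
    linarith
  · exact vol_line _ _ (Or.inl (ne_of_gt (Real.sqrt_pos.2 (by norm_num))))

lemma null_P13 : volume (P1 ∩ P3) = 0 := by
  refine measure_mono_null (?_ : _ ⊆ {p : E2 | 0 * p 0 + 1 * p 1 = 0}) ?_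
  · rintro p ⟨hp1, hp2⟩
    rw [P1_eq] at hp1; rw [P3_eq] at hp2
    obtain ⟨a, b, ⟨ha0, ha1⟩, ⟨hb0, hb1⟩, rfl⟩ := mem_par.1 hp1
    obtain ⟨a', b', ⟨ha0', ha1'⟩, ⟨hb0', hb1'⟩, he⟩ := mem_par.1 hp2
    have ht : (0:ℝ) ≤ Real.sqrt 3 := Real.sqrt_nonneg 3
    have e1 : (a • pt 1 0 + b • pt (-(1/2)) (Real.sqrt 3 / 2)) 1 = b * (Real.sqrt 3 / 2) := by
      simp
    have e2 : (a' • pt 1 0 + b' • pt (-(1/2)) (-(Real.sqrt 3 / 2))) 1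
        = -(b' * (Real.sqrt 3 / 2)) := by simp; try ring
    show 0 * _ + 1 * _ = 0
    have hge : 0 ≤ b * (Real.sqrt 3 / 2) := mul_nonneg hb0 (by positivity)
    have hle : b * (Real.sqrt 3 / 2) ≤ 0 := by
      rw [← e1, he, e2]
      exact neg_nonpos.2 (mul_nonneg hb0' (by positivity))
    rw [e1]
    linarith
  · exact vol_line _ _ (Or.inr one_ne_zero)

lemma null_P23 : volume (P2 ∩ P3) = 0 := by
  refine measure_mono_null (?_ : _ ⊆ {p : E2 | (-(Real.sqrt 3)) * p 0 + 1 * p 1 = 0}) ?_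
  · rintro p ⟨hp1, hp2⟩
    rw [P2_eq] at hp1; rw [P3_eq] at hp2
    obtain ⟨a, b, ⟨ha0, ha1⟩, ⟨hb0, hb1⟩, rfl⟩ := mem_par.1 hp1
    obtain ⟨a', b', ⟨ha0', ha1'⟩, ⟨hb0', hb1'⟩, he⟩ := mem_par.1 hp2
    have ht : (0:ℝ) ≤ Real.sqrt 3 := Real.sqrt_nonneg 3
    have e1 : (-(Real.sqrt 3)) * ((a • pt (-(1/2)) (Real.sqrt 3 / 2)
        + b • pt (-(1/2)) (-(Real.sqrt 3 / 2))) 0)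
        + 1 * ((a • pt (-(1/2)) (Real.sqrt 3 / 2)
        + b • pt (-(1/2)) (-(Real.sqrt 3 / 2))) 1) = Real.sqrt 3 * a := by
      simp; ring
    have e2 : (-(Real.sqrt 3)) * ((a' • pt 1 0 + b' • pt (-(1/2)) (-(Real.sqrt 3 / 2))) 0)
        + 1 * ((a' • pt 1 0 + b' • pt (-(1/2)) (-(Real.sqrt 3 / 2))) 1)
        = -(Real.sqrt 3 * a') := by
      simp; ring
    show (-(Real.sqrt 3)) * _ + 1 * _ = 0
    rw [e1]
    have hge : 0 ≤ Real.sqrt 3 * a := mul_nonneg ht ha0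
    have hle : Real.sqrt 3 * a ≤ 0 := by
      rw [← e1, he, e2]; exact neg_nonpos.2 (mul_nonneg ht ha0')
    linarith
  · exact vol_line _ _ (Or.inr one_ne_zero)

/-! ### Translated hexagon -/

def tv : E2 := pt 0 (Real.sqrt 3)

lemma translate_hull (S : Set E2) :
    (fun p => p + tv) '' convexHull ℝ S = convexHull ℝ ((fun p => p + tv) '' S) := by
  have hfun : (fun p : E2 => p + tv) = (fun p : E2 => tv +ᵥ p) := by
    funext p; exact add_comm p tv
  rw [hfun, Set.image_vadd, Set.image_vadd, convexHull_vadd]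

lemma Qa_eq : Qa = (fun p => p + tv) '' P1 := by
  rw [Qa, P1, translate_hull, Set.image_insert_eq, Set.image_insert_eq, Set.image_insert_eq,
    Set.image_singleton,
    show pt 0 0 + tv = pt 0 (Real.sqrt 3) by apply E2_ext <;> simp [tv],
    show pt 1 0 + tv = pt 1 (Real.sqrt 3) by apply E2_ext <;> simp [tv],
    show pt (1/2) (Real.sqrt 3 / 2) + tv = pt (1/2) (3*Real.sqrt 3/2) by
      apply E2_ext <;> simp [tv] <;> ring,
    show pt (-(1/2)) (Real.sqrt 3 / 2) + tv = pt (-(1/2)) (3*Real.sqrt 3/2) by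
      apply E2_ext <;> simp [tv] <;> ring]

lemma Qb_eq : Qb = (fun p => p + tv) '' P2 := by
  rw [Qb, P2, translate_hull, Set.image_insert_eq, Set.image_insert_eq, Set.image_insert_eq,
    Set.image_singleton,
    show pt 0 0 + tv = pt 0 (Real.sqrt 3) by apply E2_ext <;> simp [tv],
    show pt (-(1/2)) (Real.sqrt 3 / 2) + tv = pt (-(1/2)) (3*Real.sqrt 3/2) by
      apply E2_ext <;> simp [tv] <;> ring,
    show pt (-1) 0 + tv = pt (-1) (Real.sqrt 3) by apply E2_ext <;> simp [tv],
    show pt (-(1/2)) (-(Real.sqrt 3 / 2)) + tv = pt (-(1/2)) (Real.sqrt 3/2) by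
      apply E2_ext <;> simp [tv] <;> ring]

lemma Qc_eq : Qc = (fun p => p + tv) '' P3 := by
  rw [Qc, P3, translate_hull, Set.image_insert_eq, Set.image_insert_eq, Set.image_insert_eq,
    Set.image_singleton,
    show pt 0 0 + tv = pt 0 (Real.sqrt 3) by apply E2_ext <;> simp [tv],
    show pt (-(1/2)) (-(Real.sqrt 3 / 2)) + tv = pt (-(1/2)) (Real.sqrt 3/2) by
      apply E2_ext <;> simp [tv] <;> ring,
    show pt (1/2) (-(Real.sqrt 3 / 2)) + tv = pt (1/2) (Real.sqrt 3/2) by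
      apply E2_ext <;> simp [tv] <;> ring,
    show pt 1 0 + tv = pt 1 (Real.sqrt 3) by apply E2_ext <;> simp [tv]]

lemma hexa'_eq : hexa' = Qa ∪ Qb ∪ Qc := by
  rw [hexa',
    show pt 0 (Real.sqrt 3) = tv from rfl,
    hexa_eq, Set.image_union, Set.image_union, Qa_eq, Qb_eq, Qc_eq]

lemma image_tv_eq_preimage (A : Set E2) :
    (fun p => p + tv) '' A = (fun p => p + (-tv)) ⁻¹' A := by
  ext p
  constructor
  · rintro ⟨q, hq, rfl⟩
    simpa using hq
  · intro hp
    exact ⟨p + (-tv), hp, by simp⟩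

lemma vol_translate (A : Set E2) : volume ((fun p => p + tv) '' A) = volume A := by
  rw [image_tv_eq_preimage]
  exact measure_preimage_add_right volume (-tv) A

lemma vol_Qa : volume Qa = ENNReal.ofReal (Real.sqrt 3 / 2) := by
  rw [Qa_eq, vol_translate, vol_P1]
lemma vol_Qb : volume Qb = ENNReal.ofReal (Real.sqrt 3 / 2) := by
  rw [Qb_eq, vol_translate, vol_P2]
lemma vol_Qc : volume Qc = ENNReal.ofReal (Real.sqrt 3 / 2) := by
  rw [Qc_eq, vol_translate, vol_P3]

lemma null_Qab : volume (Qa ∩ Qb) = 0 := by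
  rw [Qa_eq, Qb_eq, ← Set.image_inter (add_left_injective tv), vol_translate]
  exact null_P12
lemma null_Qac : volume (Qa ∩ Qc) = 0 := by
  rw [Qa_eq, Qc_eq, ← Set.image_inter (add_left_injective tv), vol_translate]
  exact null_P13
lemma null_Qbc : volume (Qb ∩ Qc) = 0 := by
  rw [Qb_eq, Qc_eq, ← Set.image_inter (add_left_injective tv), vol_translate]
  exact null_P23



/-! ### Measurability -/

lemma meas_conv {S : Set E2} (h : S.Finite) : MeasurableSet (convexHull ℝ S) :=
  (h.isCompact_convexHull ℝ).isClosed.measurableSet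

lemma meas_P1 : MeasurableSet P1 := by rw [P1]; exact meas_conv (Set.toFinite _)
lemma meas_P2 : MeasurableSet P2 := by rw [P2]; exact meas_conv (Set.toFinite _)
lemma meas_P3 : MeasurableSet P3 := by rw [P3]; exact meas_conv (Set.toFinite _)
lemma meas_Qa : MeasurableSet Qa := by rw [Qa]; exact meas_conv (Set.toFinite _)
lemma meas_Qb : MeasurableSet Qb := by rw [Qb]; exact meas_conv (Set.toFinite _)
lemma meas_Qc : MeasurableSet Qc := by rw [Qc]; exact meas_conv (Set.toFinite _)

lemma measS (d : ℝ) : MeasurableSet {p : E2 × E2 | dist p.1 p.2 ≤ d} :=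
  (isClosed_le (continuous_fst.dist continuous_snd) continuous_const).measurableSet

/-! ### Decomposition of the uniform measure -/

lemma restrict_triple {A B C : Set E2} (hB : MeasurableSet B) (hC : MeasurableSet C)
    (hAB : volume (A ∩ B) = 0) (hAC : volume (A ∩ C) = 0) (hBC : volume (B ∩ C) = 0) :
    volume.restrict (A ∪ B ∪ C)
      = volume.restrict A + volume.restrict B + volume.restrict C := by
  have h1 : volume.restrict (A ∪ B) = volume.restrict A + volume.restrict B := by
    have h := Measure.restrict_union_add_inter (μ := volume) A hB
    rwa [Measure.restrict_eq_zero.2 hAB, add_zero] at h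
  have h2 : volume.restrict (A ∪ B ∪ C) = volume.restrict (A ∪ B) + volume.restrict C := by
    have h := Measure.restrict_union_add_inter (μ := volume) (A ∪ B) hC
    have hz : volume ((A ∪ B) ∩ C) = 0 := by
      rw [Set.union_inter_distrib_right]
      exact measure_union_null hAC hBC
    rwa [Measure.restrict_eq_zero.2 hz, add_zero] at h
  rw [h2, h1]

lemma vol_triple {A B C : Set E2} (hB : MeasurableSet B) (hC : MeasurableSet C)
    (hAB : volume (A ∩ B) = 0) (hAC : volume (A ∩ C) = 0) (hBC : volume (B ∩ C) = 0) :
    volume (A ∪ B ∪ C) = volume A + volume B + volume C := by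
  have h := restrict_triple hB hC hAB hAC hBC
  calc volume (A ∪ B ∪ C) = (volume.restrict (A ∪ B ∪ C)) Set.univ := by
        rw [Measure.restrict_apply_univ]
    _ = volume A + volume B + volume C := by
        rw [h]
        simp [Measure.restrict_apply_univ]

lemma unif_triple {A B C : Set E2} {r : ℝ≥0∞} (hr0 : r ≠ 0) (hrt : r ≠ ⊤)
    (hB : MeasurableSet B) (hC : MeasurableSet C)
    (hvA : volume A = r) (hvB : volume B = r) (hvC : volume C = r)
    (hAB : volume (A ∩ B) = 0) (hAC : volume (A ∩ C) = 0) (hBC : volume (B ∩ C) = 0) :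
    unif (A ∪ B ∪ C) = (3:ℝ≥0∞)⁻¹ • unif A + (3:ℝ≥0∞)⁻¹ • unif B + (3:ℝ≥0∞)⁻¹ • unif C := by
  rw [unif, restrict_triple hB hC hAB hAC hBC, vol_triple hB hC hAB hAC hBC, hvA, hvB, hvC]
  have h3 : r + r + r = 3 * r := by ring
  rw [h3, ENNReal.mul_inv (Or.inl (by norm_num)) (Or.inl (by norm_num))]
  rw [smul_add, smul_add, mul_smul, mul_smul, mul_smul]
  rw [unif, unif, unif, hvA, hvB, hvC]

lemma unif_hexa :
    unif hexa = (3:ℝ≥0∞)⁻¹ • unif P1 + (3:ℝ≥0∞)⁻¹ • unif P2 + (3:ℝ≥0∞)⁻¹ • unif P3 := by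
  rw [hexa_eq]
  exact unif_triple (r := ENNReal.ofReal (Real.sqrt 3 / 2))
    (ENNReal.ofReal_pos.2 (by positivity)).ne' ENNReal.ofReal_ne_top
    meas_P2 meas_P3 vol_P1 vol_P2 vol_P3 null_P12 null_P13 null_P23

lemma unif_hexa' :
    unif hexa' = (3:ℝ≥0∞)⁻¹ • unif Qa + (3:ℝ≥0∞)⁻¹ • unif Qb + (3:ℝ≥0∞)⁻¹ • unif Qc := by
  rw [hexa'_eq]
  exact unif_triple (r := ENNReal.ofReal (Real.sqrt 3 / 2))
    (ENNReal.ofReal_pos.2 (by positivity)).ne' ENNReal.ofReal_ne_top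
    meas_Qb meas_Qc vol_Qa vol_Qb vol_Qc null_Qab null_Qac null_Qbc

instance unif_sfinite (K : Set E2) : SFinite (unif K) := by
  unfold unif; infer_instance

/-! ### Bilinearity of G -/

lemma Gsmul (c c' : ℝ≥0∞) (K K' : Set E2) (d : ℝ) :
    ((c • unif K).prod (c' • unif K')) {p : E2 × E2 | dist p.1 p.2 ≤ d}
      = c * c' * G K K' d := by
  rw [G, Measure.prod_apply (measS d), Measure.prod_apply (measS d), lintegral_smul_measure]
  simp only [Measure.smul_apply, smul_eq_mul]
  rw [lintegral_const_mul _ (measurable_measure_prodMk_left (measS d))]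
  ring

lemma G_hexa_expand (d : ℝ) :
    G hexa hexa' d = 9⁻¹ * (G P1 Qa d + G P1 Qb d + G P1 Qc d
      + G P2 Qa d + G P2 Qb d + G P2 Qc d
      + G P3 Qa d + G P3 Qb d + G P3 Qc d) := by
  rw [G, unif_hexa, unif_hexa']
  rw [Measure.add_prod, Measure.add_prod]
  simp only [Measure.prod_add, Measure.add_apply, Gsmul]
  have h9 : (3:ℝ≥0∞)⁻¹ * 3⁻¹ = 9⁻¹ := by
    rw [← ENNReal.mul_inv (Or.inl (by norm_num)) (Or.inl (by norm_num))]
    norm_num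
  rw [h9]
  ring

/-! ### The reflection symmetry -/

def neg2 : E2 ≃ₗᵢ[ℝ] E2 where
  toFun p := pt (p 0) (-(p 1))
  invFun p := pt (p 0) (-(p 1))
  map_add' p q := by apply E2_ext <;> simp <;> ring
  map_smul' r p := by apply E2_ext <;> simp [mul_comm] <;> ring
  left_inv p := by apply E2_ext <;> simp
  right_inv p := by apply E2_ext <;> simp
  norm_map' p := by
    simp [EuclideanSpace.norm_eq, Fin.sum_univ_two]

def Tmap : E2 → E2 := fun p => neg2 p + tv

lemma T_meas_pres : MeasurePreserving Tmap volume volume :=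
  (measurePreserving_add_right volume tv).comp neg2.measurePreserving

def Tequiv : E2 ≃ᵐ E2 :=
  (neg2.toHomeomorph.toMeasurableEquiv).trans (MeasurableEquiv.addRight tv)

lemma Tequiv_coe : (Tequiv : E2 → E2) = Tmap := rfl

lemma T_emb : MeasurableEmbedding Tmap := by
  rw [← Tequiv_coe]; exact Tequiv.measurableEmbedding

lemma T_dist (x y : E2) : dist (Tmap x) (Tmap y) = dist x y := by
  show dist (neg2 x + tv) (neg2 y + tv) = dist x y
  rw [dist_add_right]
  exact neg2.dist_map x y

lemma T_apply (a b : ℝ) : Tmap (pt a b) = pt a (Real.sqrt 3 - b) := by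
  apply E2_ext
  · show a + 0 = a; ring
  · show -b + Real.sqrt 3 = Real.sqrt 3 - b; ring

lemma T_hull (S : Set E2) : Tmap '' convexHull ℝ S = convexHull ℝ (Tmap '' S) := by
  have hcomp : Tmap = (fun p => p + tv) ∘ (neg2 : E2 → E2) := rfl
  have hl : (neg2 : E2 → E2) '' convexHull ℝ S = convexHull ℝ ((neg2 : E2 → E2) '' S) := by
    have h := (neg2.toLinearEquiv.toLinearMap).image_convexHull S
    simpa using h
  rw [hcomp, Set.image_comp, hl, translate_hull, Set.image_comp]

lemma unif_T (K : Set E2) (hK : MeasurableSet K) :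
    unif (Tmap '' K) = Measure.map Tmap (unif K) := by
  have hvol : volume (Tmap '' K) = volume K := by
    have h := T_meas_pres.measure_preimage
      (s := Tmap '' K) (T_emb.measurableSet_image.2 hK).nullMeasurableSet
    rw [T_emb.injective.preimage_image] at h
    exact h.symm
  have hres : Measure.map Tmap (volume.restrict K) = volume.restrict (Tmap '' K) := by
    exact (T_meas_pres.restrict_image_emb T_emb K).map_eq
  rw [unif, unif, Measure.map_smul, hres, hvol]

lemma G_T (K K' : Set E2) (hK : MeasurableSet K) (hK' : MeasurableSet K') (d : ℝ) :
    G (Tmap '' K) (Tmap '' K') d = G K K' d := by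
  rw [G, G, unif_T K hK, unif_T K' hK']
  rw [Measure.map_prod_map _ _ T_emb.measurable T_emb.measurable]
  rw [Measure.map_apply (T_emb.measurable.prodMap T_emb.measurable) (measS d)]
  congr 1
  ext p
  simp only [Set.mem_preimage, Set.mem_setOf_eq, Prod.map_fst, Prod.map_snd]
  rw [T_dist]

lemma G_swap (K K' : Set E2) (d : ℝ) : G K K' d = G K' K d := by
  rw [G, G, ← Measure.prod_swap]
  rw [Measure.map_apply measurable_swap (measS d)]
  congr 1
  ext p
  simp only [Set.mem_preimage, Set.mem_setOf_eq, Prod.fst_swap, Prod.snd_swap]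
  rw [dist_comm]

/-! ### Images of the rhombi under the reflection -/

lemma T_image_P2 : Tmap '' P2 = Qb := by
  rw [P2, Qb, T_hull, Set.image_insert_eq, Set.image_insert_eq, Set.image_insert_eq,
    Set.image_singleton, T_apply, T_apply, T_apply, T_apply,
    show Real.sqrt 3 - 0 = Real.sqrt 3 by ring,
    show Real.sqrt 3 - Real.sqrt 3 / 2 = Real.sqrt 3/2 by ring,
    show Real.sqrt 3 - -(Real.sqrt 3 / 2) = 3*Real.sqrt 3/2 by ring]
  congr 1
  ext x
  simp only [Set.mem_insert_iff, Set.mem_singleton_iff]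
  tauto

lemma T_image_P3 : Tmap '' P3 = Qa := by
  rw [P3, Qa, T_hull, Set.image_insert_eq, Set.image_insert_eq, Set.image_insert_eq,
    Set.image_singleton, T_apply, T_apply, T_apply, T_apply,
    show Real.sqrt 3 - 0 = Real.sqrt 3 by ring,
    show Real.sqrt 3 - -(Real.sqrt 3 / 2) = 3*Real.sqrt 3/2 by ring]
  congr 1
  ext x
  simp only [Set.mem_insert_iff, Set.mem_singleton_iff]
  tauto

lemma T_image_Qb : Tmap '' Qb = P2 := by
  rw [P2, Qb, T_hull, Set.image_insert_eq, Set.image_insert_eq, Set.image_insert_eq,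
    Set.image_singleton, T_apply, T_apply, T_apply, T_apply,
    show Real.sqrt 3 - Real.sqrt 3 = 0 by ring,
    show Real.sqrt 3 - 3*Real.sqrt 3/2 = -(Real.sqrt 3/2) by ring,
    show Real.sqrt 3 - Real.sqrt 3/2 = Real.sqrt 3/2 by ring]
  congr 1
  ext x
  simp only [Set.mem_insert_iff, Set.mem_singleton_iff]
  constructor
  · rintro (rfl | rfl | rfl | rfl) <;> norm_num <;> tauto
  · rintro (rfl | rfl | rfl | rfl) <;> norm_num <;> tauto

lemma T_image_Qc : Tmap '' Qc = P1 := by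
  rw [P1, Qc, T_hull, Set.image_insert_eq, Set.image_insert_eq, Set.image_insert_eq,
    Set.image_singleton, T_apply, T_apply, T_apply, T_apply,
    show Real.sqrt 3 - Real.sqrt 3 = 0 by ring,
    show Real.sqrt 3 - Real.sqrt 3/2 = Real.sqrt 3/2 by ring]
  congr 1
  ext x
  simp only [Set.mem_insert_iff, Set.mem_singleton_iff]
  constructor
  · rintro (rfl | rfl | rfl | rfl) <;> norm_num <;> tauto
  · rintro (rfl | rfl | rfl | rfl) <;> norm_num <;> tauto

/-! ### The three symmetry identities -/

lemma G_P2Qc (d : ℝ) : G P2 Qc d = G P1 Qb d := by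
  have h := G_T P2 Qc meas_P2 meas_Qc d
  rw [T_image_P2, T_image_Qc] at h
  rw [← h, G_swap]

lemma G_P3Qb (d : ℝ) : G P3 Qb d = G P2 Qa d := by
  have h := G_T P3 Qb meas_P3 meas_Qb d
  rw [T_image_P3, T_image_Qb] at h
  rw [← h, G_swap]

lemma G_P3Qc (d : ℝ) : G P3 Qc d = G P1 Qa d := by
  have h := G_T P3 Qc meas_P3 meas_Qc d
  rw [T_image_P3, T_image_Qc] at h
  rw [← h, G_swap]


/-- Mixture identity for the distance CDF between two adjacent unit hexagons in terms of
the rhombus-pair CDFs. -/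
theorem stmt13 :
    ∀ d : ℝ,
      G hexa hexa' d =
        (1/9 : ℝ≥0∞) * (G P1 Qc d + G P2 Qb d + G P3 Qa d)
          + (2/9 : ℝ≥0∞) * (G P1 Qa d + G P1 Qb d + G P2 Qa d) := by
  intro d
  rw [G_hexa_expand, G_P2Qc, G_P3Qb, G_P3Qc]
  rw [show (1/9 : ℝ≥0∞) = 9⁻¹ by rw [one_div], show (2/9 : ℝ≥0∞) = 2 * 9⁻¹ by
    rw [div_eq_mul_inv]]
  ring
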